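/- arXiv:2101.09047 — 3 statements merged into one kernel-verified Lean document; each statement's English description precedes it below -/
import Mathlib

section
/- Suppose there exists a multiplier λ = (λ₀, λ₁, λ₂) ∈ ℝ × ℝ³ × ℝ such that the function M(v) = exp(m λ₀ + m λ₁·v + m λ₂|v|²) belongs to the constraint set χ (i.e., M ≥ 0, ν(v)(1+|v|²)M(v) is integrable on ℝ³, and ∫ ν(v)(m, m v, m|v|²)(M(v) − f(v)) dv = 0). Then M minimizes the weighted entropy functional g ↦ ∫ ν(v) h(g(v)) dv over χ: for every g ∈ χ one has ∫ ν h(g) dv ≥ ∫ ν h(M) dv; moreover, if ν > 0 almost everywhere, then M is the unique minimizer (any minimizer equals M almost everywhere). -/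
open MeasureTheory Real Filter
open scoped Topology

noncomputable section

abbrev V3 : Type := Fin 3 → ℝ

def dot3 (a b : V3) : ℝ := ∑ i, a i * b i

def nsq (v : V3) : ℝ := ∑ i, (v i) ^ 2

abbrev L5 : Type := ℝ × V3 × ℝ

def dot5 (a b : L5) : ℝ := a.1 * b.1 + dot3 a.2.1 b.2.1 + a.2.2 * b.2.2

def aVec (m : ℝ) (v : V3) : L5 := (m, m • v, m * nsq v)

def expA (m : ℝ) (l : L5) (v : V3) : ℝ := Real.exp (dot5 l (aVec m v))

def momVec (m : ℝ) (ν g : V3 → ℝ) : L5 :=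
  (∫ v, ν v * (m * g v), fun i => ∫ v, ν v * (m * v i) * g v,
    ∫ v, ν v * (m * nsq v) * g v)

def zdual (m : ℝ) (ν : V3 → ℝ) (l ρ : L5) : ℝ :=
  (∫ v, ν v * expA m l v) - dot5 l ρ

def entH (z : ℝ) : ℝ := z * Real.log z - z

def dualCLM (ρ : L5) : L5 →L[ℝ] ℝ :=
  LinearMap.toContinuousLinearMap
    { toFun := fun δ => dot5 δ ρ
      map_add' := by
        intro a b
        simp [dot5, dot3, Prod.fst_add, Prod.snd_add, Pi.add_apply, add_mul,
          Finset.sum_add_distrib]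
        ring
      map_smul' := by
        intro c a
        simp only [dot5, dot3, Prod.smul_fst, Prod.smul_snd, Pi.smul_apply,
          smul_eq_mul, Finset.mul_sum, RingHom.id_apply]
        ring_nf
        rw [Finset.mul_sum]
        ring_nf }


/-- Membership in the constraint set χ: nonnegativity, weighted integrability,
and the intra-species moment constraints relative to `f`. -/
def memChi (m : ℝ) (ν f g : V3 → ℝ) : Prop :=
  (∀ v, 0 ≤ g v) ∧
  Integrable (fun v => ν v * (1 + nsq v) * g v) ∧
  (∫ v, ν v * (m * (g v - f v))) = 0 ∧
  (∀ i : Fin 3, (∫ v, ν v * (m * v i * (g v - f v))) = 0) ∧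
  (∫ v, ν v * (m * nsq v * (g v - f v))) = 0


lemma nsq_nonneg' (v : V3) : 0 ≤ nsq v :=
  Finset.sum_nonneg fun _ _ => sq_nonneg _

lemma measurable_nsq' : Measurable nsq :=
  Finset.measurable_sum _ fun i _ => (measurable_pi_apply i).pow measurable_const

lemma abs_le_one_add_nsq (v : V3) (i : Fin 3) : |v i| ≤ 1 + nsq v := by
  have h1 : (v i) ^ 2 ≤ nsq v :=
    Finset.single_le_sum (f := fun j => (v j) ^ 2) (fun j _ => sq_nonneg _) (Finset.mem_univ i)
  have h2 : |v i| ^ 2 = (v i) ^ 2 := sq_abs _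
  nlinarith [abs_nonneg (v i)]

lemma integrable_q (ν g : V3 → ℝ)
    (hg : Integrable (fun v => ν v * (1 + nsq v) * g v))
    (q : V3 → ℝ) (hq : Measurable q) (hqb : ∀ v, |q v| ≤ 1 + nsq v) :
    Integrable (fun v => q v * (ν v * g v)) := by
  have hpos : ∀ v : V3, (0:ℝ) < 1 + nsq v := fun v => by
    have := nsq_nonneg' v; linarith
  have heq : (fun v => q v * (ν v * g v)) =
      fun v => (q v * (1 + nsq v)⁻¹) * (ν v * (1 + nsq v) * g v) := by
    funext v
    have hne : (1 + nsq v) ≠ 0 := (hpos v).ne'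
    field_simp
  rw [heq]
  apply Integrable.mono hg
  · exact ((hq.mul ((measurable_const.add measurable_nsq').inv)).aestronglyMeasurable).mul
      hg.aestronglyMeasurable
  · filter_upwards with v
    rw [norm_mul]
    have hb : ‖q v * (1 + nsq v)⁻¹‖ ≤ 1 := by
      rw [Real.norm_eq_abs, abs_mul, abs_inv, abs_of_pos (hpos v), ← div_eq_mul_inv,
        div_le_one (hpos v)]
      exact hqb v
    calc ‖q v * (1 + nsq v)⁻¹‖ * ‖ν v * (1 + nsq v) * g v‖
        ≤ 1 * ‖ν v * (1 + nsq v) * g v‖ :=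
          mul_le_mul_of_nonneg_right hb (norm_nonneg _)
      _ = ‖ν v * (1 + nsq v) * g v‖ := one_mul _

lemma ent_key {z w : ℝ} (hz : 0 ≤ z) (hw : 0 < w) :
    Real.log w * (z - w) ≤ entH z - entH w := by
  rcases hz.lt_or_eq with h | h
  · have hlog : Real.log (w / z) ≤ w / z - 1 := Real.log_le_sub_one_of_pos (by positivity)
    have h1 : z * Real.log (w / z) ≤ z * (w / z - 1) :=
      mul_le_mul_of_nonneg_left hlog h.le
    rw [Real.log_div hw.ne' h.ne'] at h1
    have h2 : z * (w / z - 1) = w - z := by field_simp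
    rw [h2] at h1
    simp only [entH]
    nlinarith [h1]
  · rw [← h]
    simp only [entH]
    nlinarith [hw, Real.log_zero]

lemma ent_eq {z w : ℝ} (hz : 0 ≤ z) (hw : 0 < w)
    (h : entH z - entH w = Real.log w * (z - w)) : z = w := by
  rcases hz.lt_or_eq with hpos | h0
  · by_contra hne
    have hr : w / z ≠ 1 := by
      intro hh
      rw [div_eq_one_iff_eq hpos.ne'] at hh
      exact hne hh.symm
    have hlog : Real.log (w / z) < w / z - 1 :=
      Real.log_lt_sub_one_of_pos (by positivity) hr
    have h1 : z * Real.log (w / z) < z * (w / z - 1) :=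
      mul_lt_mul_of_pos_left hlog hpos
    rw [Real.log_div hw.ne' hpos.ne'] at h1
    have h2 : z * (w / z - 1) = w - z := by field_simp
    rw [h2] at h1
    simp only [entH] at h
    nlinarith [h1, h]
  · exfalso
    rw [← h0] at h
    simp only [entH] at h
    nlinarith [hw, h]

def Lfun (m : ℝ) (l : L5) (v : V3) : ℝ :=
  m * l.1 + m * dot3 l.2.1 v + m * l.2.2 * nsq v

lemma lfun_pack (m : ℝ) (l : L5) (ν p : V3 → ℝ)
    (hp : Integrable (fun v => ν v * (1 + nsq v) * p v)) :
    Integrable (fun v => Lfun m l v * (ν v * p v)) ∧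
    (∫ v, Lfun m l v * (ν v * p v)) =
      (m * l.1) * (∫ v, (1:ℝ) * (ν v * p v))
      + (m * l.2.1 0) * (∫ v, v 0 * (ν v * p v))
      + (m * l.2.1 1) * (∫ v, v 1 * (ν v * p v))
      + (m * l.2.1 2) * (∫ v, v 2 * (ν v * p v))
      + (m * l.2.2) * (∫ v, nsq v * (ν v * p v)) := by
  have h0 : Integrable (fun v => (1:ℝ) * (ν v * p v)) :=
    integrable_q ν p hp (fun _ => 1) measurable_const
      (fun v => by rw [abs_one]; have := nsq_nonneg' v; linarith)
  have hi : ∀ i : Fin 3, Integrable (fun v => v i * (ν v * p v)) := fun i =>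
    integrable_q ν p hp (fun v => v i) (measurable_pi_apply i)
      (fun v => abs_le_one_add_nsq v i)
  have hn : Integrable (fun v => nsq v * (ν v * p v)) :=
    integrable_q ν p hp nsq measurable_nsq'
      (fun v => by rw [abs_of_nonneg (nsq_nonneg' v)]; linarith)
  have I1 : Integrable (fun v => (m * l.1) * ((1:ℝ) * (ν v * p v))) := h0.const_mul (m * l.1)
  have I2 : Integrable (fun v : V3 => (m * l.2.1 0) * (v 0 * (ν v * p v))) := (hi 0).const_mul (m * l.2.1 0)
  have I3 : Integrable (fun v : V3 => (m * l.2.1 1) * (v 1 * (ν v * p v))) := (hi 1).const_mul (m * l.2.1 1)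
  have I4 : Integrable (fun v : V3 => (m * l.2.1 2) * (v 2 * (ν v * p v))) := (hi 2).const_mul (m * l.2.1 2)
  have I5 : Integrable (fun v => (m * l.2.2) * (nsq v * (ν v * p v))) := hn.const_mul (m * l.2.2)
  have I12 : Integrable (fun v : V3 => (m * l.1) * ((1:ℝ) * (ν v * p v)) + (m * l.2.1 0) * (v 0 * (ν v * p v))) := I1.add I2
  have I123 : Integrable (fun v : V3 => (m * l.1) * ((1:ℝ) * (ν v * p v)) + (m * l.2.1 0) * (v 0 * (ν v * p v)) + (m * l.2.1 1) * (v 1 * (ν v * p v))) := I12.add I3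
  have I1234 : Integrable (fun v : V3 => (m * l.1) * ((1:ℝ) * (ν v * p v)) + (m * l.2.1 0) * (v 0 * (ν v * p v)) + (m * l.2.1 1) * (v 1 * (ν v * p v)) + (m * l.2.1 2) * (v 2 * (ν v * p v))) := I123.add I4
  have hdecomp : (fun v => Lfun m l v * (ν v * p v)) =
      fun v => (m * l.1) * ((1:ℝ) * (ν v * p v))
        + (m * l.2.1 0) * (v 0 * (ν v * p v))
        + (m * l.2.1 1) * (v 1 * (ν v * p v))
        + (m * l.2.1 2) * (v 2 * (ν v * p v))
        + (m * l.2.2) * (nsq v * (ν v * p v)) := by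
    funext v
    simp only [Lfun, dot3, Fin.sum_univ_three]
    ring
  constructor
  · rw [hdecomp]
    exact I1234.add I5
  · rw [hdecomp,
      integral_add I1234 I5,
      integral_add I123 I4,
      integral_add I12 I3,
      integral_add I1 I2]
    simp only [integral_const_mul]

/-- if an exponential function `M` of the given form lies in the
constraint set χ, then it minimizes the weighted entropy `∫ ν h(g)` over χ;
moreover, if `ν > 0` a.e., any minimizer coincides with `M` almost everywhere. -/
theorem entropy_min_single_species
    (m : ℝ) (hm : 0 < m)
    (ν : V3 → ℝ) (hνmeas : Measurable ν) (hν0 : ∀ v, 0 ≤ ν v)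
    (f : V3 → ℝ) (hfmeas : Measurable f) (hf0 : ∀ v, 0 ≤ f v)
    (hfint : Integrable (fun v => ν v * (1 + nsq v) * f v))
    (l : L5) (M : V3 → ℝ)
    (hMdef : M = fun v => Real.exp (m * l.1 + m * dot3 l.2.1 v + m * l.2.2 * nsq v))
    (hMchi : memChi m ν f M)
    (hMent : Integrable (fun v => ν v * entH (M v))) :
    (∀ g : V3 → ℝ, memChi m ν f g → Integrable (fun v => ν v * entH (g v)) →
        (∫ v, ν v * entH (M v)) ≤ ∫ v, ν v * entH (g v)) ∧
    ((∀ᵐ v, 0 < ν v) →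
      ∀ g : V3 → ℝ, memChi m ν f g → Integrable (fun v => ν v * entH (g v)) →
        (∫ v, ν v * entH (g v)) = (∫ v, ν v * entH (M v)) →
        g =ᵐ[volume] M) := by

  obtain ⟨hM0, hMint, hMc0, hMc1, hMc2⟩ := hMchi
  have hMpos : ∀ v, 0 < M v := by
    intro v; rw [hMdef]; exact Real.exp_pos _
  have hlogM : ∀ v, Real.log (M v) = Lfun m l v := by
    intro v; rw [hMdef]; simp only [Lfun]; exact Real.log_exp _
  -- moment equalities: for p in chi, each moment of p equals that of f
  have momq : ∀ (q : V3 → ℝ), Measurable q → (∀ v, |q v| ≤ 1 + nsq v) →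
      ∀ p : V3 → ℝ, Integrable (fun v => ν v * (1 + nsq v) * p v) →
      (∫ v, m * (q v * (ν v * p v) - q v * (ν v * f v))) = 0 →
      (∫ v, q v * (ν v * p v)) = ∫ v, q v * (ν v * f v) := by
    intro q hq hqb p hp hc
    have hIp := integrable_q ν p hp q hq hqb
    have hIf := integrable_q ν f hfint q hq hqb
    rw [integral_const_mul, integral_sub hIp hIf] at hc
    rcases mul_eq_zero.mp hc with h | h
    · exact absurd h hm.ne'
    · linarith [sub_eq_zero.mp h]
  -- a packaged statement: p in chi gives integrability of Lfun * (nu p) and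
  -- the value of its integral in terms of moments of f
  have Lmom : ∀ p : V3 → ℝ,
      Integrable (fun v => ν v * (1 + nsq v) * p v) →
      ((∫ v, ν v * (m * (p v - f v))) = 0) →
      (∀ i : Fin 3, (∫ v, ν v * (m * v i * (p v - f v))) = 0) →
      ((∫ v, ν v * (m * nsq v * (p v - f v))) = 0) →
      Integrable (fun v => Lfun m l v * (ν v * p v)) ∧
      (∫ v, Lfun m l v * (ν v * p v)) =
        (m * l.1) * (∫ v, (1:ℝ) * (ν v * f v))
        + (m * l.2.1 0) * (∫ v, v 0 * (ν v * f v))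
        + (m * l.2.1 1) * (∫ v, v 1 * (ν v * f v))
        + (m * l.2.1 2) * (∫ v, v 2 * (ν v * f v))
        + (m * l.2.2) * (∫ v, nsq v * (ν v * f v)) := by
    intro p hp c0 c1 c2
    obtain ⟨hint, hval⟩ := lfun_pack m l ν p hp
    refine ⟨hint, ?_⟩
    rw [hval]
    have e0 : (∫ v, (1:ℝ) * (ν v * p v)) = ∫ v, (1:ℝ) * (ν v * f v) := by
      apply momq (fun _ => 1) measurable_const
        (fun v => by rw [abs_one]; have := nsq_nonneg' v; linarith) p hp
      rw [← c0]; apply integral_congr_ae; filter_upwards with v; ring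
    have ei : ∀ i : Fin 3, (∫ v, v i * (ν v * p v)) = ∫ v, v i * (ν v * f v) := by
      intro i
      apply momq (fun v => v i) (measurable_pi_apply i) (fun v => abs_le_one_add_nsq v i) p hp
      rw [← c1 i]; apply integral_congr_ae; filter_upwards with v; ring
    have en : (∫ v, nsq v * (ν v * p v)) = ∫ v, nsq v * (ν v * f v) := by
      apply momq nsq measurable_nsq'
        (fun v => by rw [abs_of_nonneg (nsq_nonneg' v)]; linarith) p hp
      rw [← c2]; apply integral_congr_ae; filter_upwards with v; ring
    rw [e0, ei 0, ei 1, ei 2, en]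
  obtain ⟨hLMint, hLMval⟩ := Lmom M hMint hMc0 hMc1 hMc2
  -- core estimate for an arbitrary g in chi
  have core : ∀ g : V3 → ℝ, memChi m ν f g → Integrable (fun v => ν v * entH (g v)) →
      Integrable (fun v => ν v * entH (g v) - ν v * entH (M v)
        - (Lfun m l v * (ν v * g v) - Lfun m l v * (ν v * M v))) ∧
      (∫ v, (ν v * entH (g v) - ν v * entH (M v)
        - (Lfun m l v * (ν v * g v) - Lfun m l v * (ν v * M v)))) =
        (∫ v, ν v * entH (g v)) - (∫ v, ν v * entH (M v)) ∧
      (∀ v, 0 ≤ ν v * entH (g v) - ν v * entH (M v)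
        - (Lfun m l v * (ν v * g v) - Lfun m l v * (ν v * M v))) := by
    intro g hgchi hgent
    obtain ⟨hg0, hgint, hgc0, hgc1, hgc2⟩ := hgchi
    obtain ⟨hLgint, hLgval⟩ := Lmom g hgint hgc0 hgc1 hgc2
    have hsub : Integrable (fun v => Lfun m l v * (ν v * g v) - Lfun m l v * (ν v * M v)) := hLgint.sub hLMint
    have hA : Integrable (fun v => ν v * entH (g v) - ν v * entH (M v)) := hgent.sub hMent
    refine ⟨hA.sub hsub, ?_, ?_⟩
    · rw [integral_sub hA hsub, integral_sub hgent hMent, integral_sub hLgint hLMint,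
        hLgval, hLMval]
      ring
    · intro v
      have h1 : Real.log (M v) * (g v - M v) ≤ entH (g v) - entH (M v) :=
        ent_key (hg0 v) (hMpos v)
      rw [hlogM v] at h1
      have h2 : 0 ≤ ν v * (entH (g v) - entH (M v) - Lfun m l v * (g v - M v)) :=
        mul_nonneg (hν0 v) (by linarith)
      nlinarith [h2]
  constructor
  · intro g hgchi hgent
    obtain ⟨hDint, hDval, hD0⟩ := core g hgchi hgent
    have hpos : 0 ≤ ∫ v, (ν v * entH (g v) - ν v * entH (M v)
        - (Lfun m l v * (ν v * g v) - Lfun m l v * (ν v * M v))) := integral_nonneg hD0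
    rw [hDval] at hpos
    linarith
  · intro hνpos g hgchi hgent heq
    obtain ⟨hDint, hDval, hD0⟩ := core g hgchi hgent
    have hz : (∫ v, (ν v * entH (g v) - ν v * entH (M v)
        - (Lfun m l v * (ν v * g v) - Lfun m l v * (ν v * M v)))) = 0 := by
      rw [hDval, heq]; ring
    have hae := (integral_eq_zero_iff_of_nonneg hD0 hDint).mp hz
    obtain ⟨hg0, hgint, _, _, _⟩ := hgchi
    filter_upwards [hae, hνpos] with v hDv hνv
    simp only [Pi.zero_apply] at hDv
    have h3 : ν v * (entH (g v) - entH (M v) - Lfun m l v * (g v - M v)) = 0 := by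
      nlinarith [hDv]
    have h4 := (mul_eq_zero.mp h3).resolve_left hνv.ne'
    apply ent_eq (hg0 v) (hMpos v)
    rw [hlogM v]
    linarith
end
end

section
/- Let λ ∈ Λ, let ξ be a unit vector in ℝ⁵, and suppose the boundary parameter s_b(ξ,λ) = sup{ s ≥ 0 : λ + sξ ∈ Λ } is finite, so that λ + s_b(ξ,λ)ξ ∉ Λ and hence ν·exp((λ + s_b(ξ,λ)ξ)·a) is not integrable. Then ∫ ν(v) exp((λ + sξ)·a(v)) dv → ∞ as s → s_b(ξ,λ) from below; consequently, for every ρ ∈ ℝ⁵, z(λ + sξ; ρ) = ∫ ν exp((λ+sξ)·a) dv − (λ+sξ)·ρ → ∞ as s → s_b(ξ,λ)⁻. -/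
open MeasureTheory Real Filter
open scoped Topology

noncomputable section

/-- if the boundary parameter `s_b(ξ,λ) = sup{s ≥ 0 : λ + sξ ∈ Λ}`
is finite (expressed via `IsLUB`), then `∫ ν exp((λ+sξ)·a) dv → ∞` as
`s → s_b(ξ,λ)⁻`, and consequently `z(λ+sξ;ρ) → ∞` as `s → s_b(ξ,λ)⁻`
for every `ρ ∈ ℝ⁵`. -/
theorem blow_up_at_finite_boundary
    (m : ℝ) (hm : 0 < m)
    (ν : V3 → ℝ) (hνmeas : Measurable ν) (hνpos : ∀ v, 0 < ν v)
    (hass : ∀ l : L5, Integrable (fun v => ν v * expA m l v) ↔ l.2.2 < 0)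
    (l : L5) (hl : l.2.2 < 0)
    (ξ : L5) (hξ : ‖ξ‖ = 1)
    (sb : ℝ)
    (hsb : IsLUB {s : ℝ | 0 ≤ s ∧ (l + s • ξ).2.2 < 0} sb) :
    Tendsto (fun s : ℝ => ∫ v, ν v * expA m (l + s • ξ) v) (𝓝[<] sb) atTop ∧
    ∀ ρ : L5, Tendsto (fun s : ℝ => zdual m ν (l + s • ξ) ρ) (𝓝[<] sb) atTop := by
  classical
  have hsnd : ∀ s : ℝ, (l + s • ξ).2.2 = l.2.2 + s * ξ.2.2 := by
    intro s; simp [Prod.snd_add, Prod.smul_snd, smul_eq_mul]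
  -- sb is nonnegative
  have h0mem : (0:ℝ) ∈ {s : ℝ | 0 ≤ s ∧ (l + s • ξ).2.2 < 0} := by
    refine ⟨le_refl 0, ?_⟩; simpa [hsnd] using hl
  have hsb0 : 0 ≤ sb := hsb.1 h0mem
  -- ξ.2.2 must be positive
  have hξ2 : 0 < ξ.2.2 := by
    by_contra h
    push_neg at h
    have hmem : sb + 1 ∈ {s : ℝ | 0 ≤ s ∧ (l + s • ξ).2.2 < 0} := by
      refine ⟨by linarith, ?_⟩
      rw [hsnd]
      nlinarith
    have := hsb.1 hmem
    linarith
  -- identify sb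
  have hSeq : {s : ℝ | 0 ≤ s ∧ (l + s • ξ).2.2 < 0} = Set.Ico (0:ℝ) (-l.2.2 / ξ.2.2) := by
    ext s
    simp only [Set.mem_setOf_eq, Set.mem_Ico, hsnd]
    constructor
    · rintro ⟨h0, h1⟩
      exact ⟨h0, by rw [lt_div_iff₀ hξ2]; linarith⟩
    · rintro ⟨h0, h1⟩
      rw [lt_div_iff₀ hξ2] at h1
      exact ⟨h0, by linarith⟩
  have hsb_eq : sb = -l.2.2 / ξ.2.2 := by
    refine hsb.unique ?_
    rw [hSeq]
    exact isLUB_Ico (div_pos (neg_pos.2 hl) hξ2)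
  have hboundary : (l + sb • ξ).2.2 = 0 := by
    rw [hsnd, hsb_eq]
    field_simp
    ring
  have hslt : ∀ s : ℝ, s < sb → (l + s • ξ).2.2 < 0 := by
    intro s hs
    rw [hsnd]
    have : l.2.2 + sb * ξ.2.2 = 0 := by rw [← hsnd]; exact hboundary
    nlinarith
  set g : ℝ → V3 → ℝ := fun s v => ν v * expA m (l + s • ξ) v with hg
  have hgpos : ∀ s v, 0 < g s v := fun s v =>
    mul_pos (hνpos v) (Real.exp_pos _)
  have hmeas : ∀ l' : L5, Measurable fun v => ν v * expA m l' v := by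
    intro l'
    apply hνmeas.mul
    apply Measurable.exp
    simp only [dot5, dot3, aVec, nsq, Pi.smul_apply, smul_eq_mul]
    fun_prop
  have hint : ∀ s : ℝ, s < sb → Integrable (g s) := fun s hs =>
    (hass _).2 (hslt s hs)
  have hnotint : ¬ Integrable (g sb) := by
    intro h
    have := (hass _).1 h
    rw [hboundary] at this
    exact lt_irrefl 0 this
  have htop : ∫⁻ v, ENNReal.ofReal (g sb v) = ⊤ := by
    by_contra h
    apply hnotint
    refine ⟨(hmeas _).aestronglyMeasurable, ?_⟩
    rw [hasFiniteIntegral_iff_ofReal (Filter.Eventually.of_forall fun v => (hgpos sb v).le)]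
    exact lt_top_iff_ne_top.2 h
  have hcontg : ∀ v, Continuous fun s : ℝ => g s v := by
    intro v
    simp only [hg, expA, dot5, dot3, aVec, Prod.fst_add, Prod.snd_add,
      Prod.smul_fst, Prod.smul_snd, Pi.add_apply, Pi.smul_apply, smul_eq_mul]
    fun_prop
  -- main tendsto for the integral
  have hmain : Tendsto (fun s : ℝ => ∫ v, g s v) (𝓝[<] sb) atTop := by
    rw [tendsto_iff_seq_tendsto]
    intro u hu
    have h1 : Tendsto u atTop (𝓝 sb) := hu.mono_right nhdsWithin_le_nhds
    have hlt : ∀ᶠ n in atTop, u n < sb := hu self_mem_nhdsWithin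
    have hfatou : (⊤ : ENNReal) ≤
        Filter.liminf (fun n => ∫⁻ v, ENNReal.ofReal (g (u n) v)) atTop := by
      calc (⊤:ENNReal) = ∫⁻ v, ENNReal.ofReal (g sb v) := htop.symm
        _ = ∫⁻ v, Filter.liminf (fun n => ENNReal.ofReal (g (u n) v)) atTop := by
            congr 1
            ext v
            refine (Filter.Tendsto.liminf_eq ?_).symm
            exact (ENNReal.continuous_ofReal.tendsto _).comp
              (((hcontg v).tendsto sb).comp h1)
        _ ≤ Filter.liminf (fun n => ∫⁻ v, ENNReal.ofReal (g (u n) v)) atTop :=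
            lintegral_liminf_le fun n => (hmeas _).ennreal_ofReal
    rw [tendsto_atTop]
    intro C
    set C' : ℝ := max C 0 with hC'
    have hlt2 : ENNReal.ofReal C' <
        Filter.liminf (fun n => ∫⁻ v, ENNReal.ofReal (g (u n) v)) atTop :=
      lt_of_lt_of_le (by simp [ENNReal.ofReal_lt_top]) hfatou
    filter_upwards [eventually_lt_of_lt_liminf hlt2, hlt] with n hn hltn
    simp only [Function.comp_apply]
    have hintn := hint (u n) hltn
    have hfin : (∫⁻ v, ENNReal.ofReal (g (u n) v)) ≠ ⊤ := by
      have := hintn.2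
      rw [hasFiniteIntegral_iff_ofReal
        (Filter.Eventually.of_forall fun v => (hgpos _ v).le)] at this
      exact this.ne
    have heq : ∫ v, g (u n) v = (∫⁻ v, ENNReal.ofReal (g (u n) v)).toReal :=
      integral_eq_lintegral_of_nonneg_ae
        (Filter.Eventually.of_forall fun v => (hgpos _ v).le)
        (hmeas _).aestronglyMeasurable
    rw [heq]
    have : C' < (∫⁻ v, ENNReal.ofReal (g (u n) v)).toReal :=
      (ENNReal.ofReal_lt_iff_lt_toReal (le_max_right C 0) hfin).1 hn
    have hCC' : C ≤ C' := le_max_left C 0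
    linarith
  refine ⟨hmain, ?_⟩
  intro ρ
  have hcontd : Continuous fun s : ℝ => -dot5 (l + s • ξ) ρ := by
    simp only [dot5, dot3, Prod.fst_add, Prod.snd_add, Prod.smul_fst,
      Prod.smul_snd, Pi.add_apply, Pi.smul_apply, smul_eq_mul]
    fun_prop
  have hd : Tendsto (fun s : ℝ => -dot5 (l + s • ξ) ρ) (𝓝[<] sb)
      (𝓝 (-dot5 (l + sb • ξ) ρ)) :=
    (hcontd.tendsto sb).mono_left nhdsWithin_le_nhds
  have hev : ∀ᶠ s in 𝓝[<] sb, -dot5 (l + sb • ξ) ρ - 1 ≤ -dot5 (l + s • ξ) ρ := by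
    filter_upwards [hd (Metric.ball_mem_nhds _ one_pos : Metric.ball (-dot5 (l + sb • ξ) ρ) 1 ∈ _)]
      with s hs
    simp only [Set.mem_preimage, Metric.mem_ball, Real.dist_eq, abs_lt] at hs
    linarith
  have := tendsto_atTop_add_right_of_le' (𝓝[<] sb) (-dot5 (l + sb • ξ) ρ - 1) hmain hev
  simpa [zdual, sub_eq_add_neg] using this
end
end

section
/- Let λ ∈ Λ and let ξ ∈ ℝ⁵ be a unit vector such that λ + sξ ∈ Λ for all s > 0 and such that the set { v ∈ ℝ³ : ξ·a(v) > 0 } has positive Lebesgue measure. Then for every ρ ∈ ℝ⁵, z(λ + sξ; ρ) = ∫ ν(v) exp((λ + sξ)·a(v)) dv − (λ + sξ)·ρ → +∞ as s → +∞. -/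
open MeasureTheory Real Filter
open scoped Topology

noncomputable section

lemma dot5_add_smul' (l ξ w : L5) (s : ℝ) :
    dot5 (l + s • ξ) w = dot5 l w + s * dot5 ξ w := by
  simp only [dot5, dot3, Fin.sum_univ_three, Prod.fst_add, Prod.snd_add, Prod.smul_fst,
    Prod.smul_snd, Pi.add_apply, Pi.smul_apply, smul_eq_mul]
  ring

lemma dot5_cont (ξ : L5) (m : ℝ) : Continuous (fun v : V3 => dot5 ξ (aVec m v)) := by
  simp only [dot5, dot3, aVec, nsq, Fin.sum_univ_three, Pi.smul_apply, smul_eq_mul]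
  continuity

/-- if the ray `λ + sξ` stays in `Λ` for all `s > 0` and the set
`{v : ξ·a(v) > 0}` has positive Lebesgue measure, then `z(λ+sξ;ρ) → +∞` as
`s → +∞` for every `ρ ∈ ℝ⁵`. -/
theorem direction_positive_part_unbounded
    (m : ℝ) (hm : 0 < m)
    (ν : V3 → ℝ) (hνmeas : Measurable ν) (hνpos : ∀ v, 0 < ν v)
    (hass : ∀ l : L5, Integrable (fun v => ν v * expA m l v) ↔ l.2.2 < 0)
    (l : L5) (hl : l.2.2 < 0)
    (ξ : L5) (hξ : ‖ξ‖ = 1)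
    (hray : ∀ s : ℝ, 0 < s → (l + s • ξ).2.2 < 0)
    (hpos : 0 < volume {v : V3 | 0 < dot5 ξ (aVec m v)}) :
    ∀ ρ : L5, Tendsto (fun s : ℝ => zdual m ν (l + s • ξ) ρ) atTop atTop := by
  intro ρ
  set g : V3 → ℝ := fun v => dot5 ξ (aVec m v) with hg_def
  have hgcont : Continuous g := dot5_cont ξ m
  -- find ε > 0 with positive measure superlevel set
  obtain ⟨ε, hε, hEpos⟩ : ∃ ε : ℝ, 0 < ε ∧ 0 < volume {v : V3 | ε ≤ g v} := by
    by_contra hcon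
    push_neg at hcon
    have hnull : ∀ n : ℕ, volume {v : V3 | 1 / (n + 1 : ℝ) ≤ g v} = 0 := by
      intro n
      have h1 : (0 : ℝ) < 1 / (n + 1 : ℝ) := by positivity
      have := hcon (1 / (n + 1 : ℝ)) h1
      exact le_antisymm this bot_le
    have hsub : {v : V3 | 0 < g v} ⊆ ⋃ n : ℕ, {v : V3 | 1 / (n + 1 : ℝ) ≤ g v} := by
      intro v hv
      obtain ⟨n, hn⟩ := exists_nat_ge (1 / g v)
      refine Set.mem_iUnion.2 ⟨n, ?_⟩
      have hgv : (0 : ℝ) < g v := hv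
      have h1 : (0 : ℝ) < 1 / g v := by positivity
      have hle : 1 / g v ≤ (n : ℝ) + 1 := hn.trans (by linarith)
      calc (1 : ℝ) / (n + 1) ≤ 1 / (1 / g v) := by
            apply one_div_le_one_div_of_le h1 hle
        _ = g v := one_div_one_div _
    have : volume {v : V3 | 0 < g v} = 0 := by
      refine measure_mono_null hsub ?_
      exact measure_iUnion_null fun n => hnull n
    rw [this] at hpos
    exact lt_irrefl 0 hpos
  set E : Set V3 := {v : V3 | ε ≤ g v} with hE_def
  have hEmeas : MeasurableSet E := (isClosed_le continuous_const hgcont).measurableSet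
  -- basic positivity of the integrand
  have hfpos : ∀ (l' : L5) (v : V3), 0 < ν v * expA m l' v := fun l' v =>
    mul_pos (hνpos v) (Real.exp_pos _)
  have hint0 : Integrable (fun v => ν v * expA m l v) := (hass l).mpr hl
  -- constant c
  set c : ℝ := ∫ v in E, ν v * expA m l v with hc_def
  have hcpos : 0 < c := by
    rw [hc_def]
    rw [MeasureTheory.setIntegral_pos_iff_support_of_nonneg_ae
      (Filter.Eventually.of_forall fun v => (hfpos l v).le) hint0.integrableOn]
    have hsupp : Function.support (fun v => ν v * expA m l v) = Set.univ :=
      Set.eq_univ_of_forall fun v => (hfpos l v).ne'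
    rw [hsupp, Set.univ_inter]
    exact hEpos
  -- lower bound of the integral for s ≥ 0, s > 0
  have hIbound : ∀ s : ℝ, 0 < s →
      c * Real.exp (s * ε) ≤ ∫ v, ν v * expA m (l + s • ξ) v := by
    intro s hs
    have hintS : Integrable (fun v => ν v * expA m (l + s • ξ) v) :=
      (hass _).mpr (hray s hs)
    have hmono : ∀ v ∈ E,
        Real.exp (s * ε) * (ν v * expA m l v) ≤ ν v * expA m (l + s • ξ) v := by
      intro v hv
      have hge : ε ≤ g v := hv
      have : expA m (l + s • ξ) v = expA m l v * Real.exp (s * g v) := by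
        simp only [expA, dot5_add_smul']
        rw [← Real.exp_add]
      rw [this]
      have hexp : Real.exp (s * ε) ≤ Real.exp (s * g v) :=
        Real.exp_le_exp.2 (mul_le_mul_of_nonneg_left hge hs.le)
      calc Real.exp (s * ε) * (ν v * expA m l v)
          ≤ Real.exp (s * g v) * (ν v * expA m l v) := by
            apply mul_le_mul_of_nonneg_right hexp (hfpos l v).le
        _ = ν v * (expA m l v * Real.exp (s * g v)) := by ring
    have h4 : ∫ v in E, Real.exp (s * ε) * (ν v * expA m l v) ≤
        ∫ v in E, ν v * expA m (l + s • ξ) v :=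
      MeasureTheory.setIntegral_mono_on
        (hint0.integrableOn.const_mul _) hintS.integrableOn hEmeas hmono
    have h5 : ∫ v in E, Real.exp (s * ε) * (ν v * expA m l v) = Real.exp (s * ε) * c := by
      rw [hc_def, MeasureTheory.integral_const_mul]
    have h6 : ∫ v in E, ν v * expA m (l + s • ξ) v ≤ ∫ v, ν v * expA m (l + s • ξ) v :=
      MeasureTheory.setIntegral_le_integral hintS
        (Filter.Eventually.of_forall fun v => (hfpos _ v).le)
    calc c * Real.exp (s * ε) = Real.exp (s * ε) * c := mul_comm _ _
      _ ≤ _ := h5 ▸ (h4.trans h6)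
  -- final: compare with a quadratic
  set k : ℝ := c * ε ^ 2 / 4 with hk_def
  have hk : 0 < k := by positivity
  set A : ℝ := dot5 l ρ with hA_def
  set B : ℝ := dot5 ξ ρ with hB_def
  have hgrow : Tendsto (fun s : ℝ => s * (k * s - B) - A) atTop atTop := by
    apply tendsto_atTop_add_const_right
    apply Filter.Tendsto.atTop_mul_atTop₀ tendsto_id
    apply tendsto_atTop_add_const_right
    exact (tendsto_id.const_mul_atTop hk)
  apply tendsto_atTop_mono' _ _ hgrow
  filter_upwards [eventually_gt_atTop (0 : ℝ)] with s hs
  have hquad : k * s ^ 2 ≤ c * Real.exp (s * ε) := by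
    have h1 : s * ε / 2 + 1 ≤ Real.exp (s * ε / 2) := by
      have := Real.add_one_le_exp (s * ε / 2); linarith
    have h2 : Real.exp (s * ε) = Real.exp (s * ε / 2) * Real.exp (s * ε / 2) := by
      rw [← Real.exp_add]; ring_nf
    have hse : 0 ≤ s * ε / 2 := by positivity
    have h3 : ε ^ 2 * s ^ 2 / 4 ≤ Real.exp (s * ε) := by
      rw [h2]; nlinarith [Real.exp_pos (s * ε / 2)]
    calc k * s ^ 2 = c * (ε ^ 2 * s ^ 2 / 4) := by rw [hk_def]; ring
      _ ≤ c * Real.exp (s * ε) := by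
          apply mul_le_mul_of_nonneg_left h3 hcpos.le
  have hz : zdual m ν (l + s • ξ) ρ =
      (∫ v, ν v * expA m (l + s • ξ) v) - A - s * B := by
    rw [zdual, dot5_add_smul']; ring
  rw [hz]
  have := hIbound s hs
  nlinarith [hquad, this]
end
end
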